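/- For any n×n×n complex tensor P, any (g₁,g₂,g₃) ∈ G(ℂ), and any i ∈ {1,2,3} with {i,j,k} = {1,2,3}, the polynomial f_i satisfies the transformation law f_i(P(g₁,g₂,g₃); x) = det(g_j)ⁿ · det(g_k)ⁿ · det(g_i)² · f_i(P; g_i x), as an identity of polynomials in the indeterminates x = (x₁,…,xₙ). -/
import Mathlib


open scoped BigOperators
open Matrix

/-- An `n×n×n` tensor with entries in `K`. -/
abbrev Tensor (n : ℕ) (K : Type*) := Fin n × Fin n × Fin n → K

namespace Tensor

variable {n : ℕ} {K : Type*}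

section CommRing
variable [CommRing K]

/-- The right action of a triple of `n×n` matrices on an `n×n×n` tensor:
`(P(g₁,g₂,g₃))_{ijk} = Σ_{a,b,c} P_{abc} g₁(a,i) g₂(b,j) g₃(c,k)`. -/
def act (P : Tensor n K) (g₁ g₂ g₃ : Matrix (Fin n) (Fin n) K) : Tensor n K :=
  fun x => ∑ a, ∑ b, ∑ c, P (a, b, c) * g₁ a x.1 * g₂ b x.2.1 * g₃ c x.2.2

/-- The diagonal tensor `D`, with `D_{iii} = 1` and all other entries `0`. -/
def DT (n : ℕ) (K : Type*) [CommRing K] : Tensor n K :=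
  fun x => if x.1 = x.2.1 ∧ x.2.1 = x.2.2 then 1 else 0

/-- The orbit of the diagonal tensor `D` under `GL(n,K)×GL(n,K)×GL(n,K)`. -/
def orbitD (n : ℕ) (K : Type*) [CommRing K] : Set (Tensor n K) :=
  {P | ∃ g₁ g₂ g₃ : Matrix (Fin n) (Fin n) K,
    IsUnit g₁.det ∧ IsUnit g₂.det ∧ IsUnit g₃.det ∧ P = (DT n K).act g₁ g₂ g₃}

/-- `P` admits a decomposition as a sum of `r` rank-one tensors. -/
def HasRankLE (P : Tensor n K) (r : ℕ) : Prop :=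
  ∃ u v w : Fin r → Fin n → K, P = fun x => ∑ l, u l x.1 * v l x.2.1 * w l x.2.2

/-- The tensor rank of `P`: the smallest `r` such that `P` is a sum of `r` rank-one tensors. -/
noncomputable def rank (P : Tensor n K) : ℕ := sInf {r | P.HasRankLE r}

/-- The three flattenings of `P` to an `n²×n` matrix; the columns of `flatten i P` are
indexed by the `i`-th index of `P`. -/
def flatten (i : Fin 3) (P : Tensor n K) : Matrix (Fin n × Fin n) (Fin n) K :=
  ![Matrix.of fun p a => P (a, p.1, p.2),
    Matrix.of fun p b => P (p.1, b, p.2),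
    Matrix.of fun p c => P (p.1, p.2, c)] i

/-- Contraction `P *_i v` of the `i`-th index of `P` against a vector `v`. -/
def contr (i : Fin 3) (P : Tensor n K) (v : Fin n → K) : Matrix (Fin n) (Fin n) K :=
  ![Matrix.of fun j k => ∑ a, P (a, j, k) * v a,
    Matrix.of fun j k => ∑ b, P (j, b, k) * v b,
    Matrix.of fun j k => ∑ c, P (j, k, c) * v c] i

/-- The `j`-th `i`-slice of `P`, i.e. `P *_i e_j`. -/
def slice (i : Fin 3) (P : Tensor n K) (j : Fin n) : Matrix (Fin n) (Fin n) K :=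
  contr i P (Pi.single j 1)

/-- The commutation relations in index `i`:
`(P*_i e_j)·adj(P*_i v)·(P*_i e_k) = (P*_i e_k)·adj(P*_i v)·(P*_i e_j)`
for all `v` and all `j < k`. -/
def CommRel (i : Fin 3) (P : Tensor n K) : Prop :=
  ∀ (v : Fin n → K) (j k : Fin n), j < k →
    slice i P j * (contr i P v).adjugate * slice i P k
      = slice i P k * (contr i P v).adjugate * slice i P j

/-- The matrix `P *_i x`, where `x` is a vector of indeterminates. -/
noncomputable def contrX (i : Fin 3) (P : Tensor n K) :
    Matrix (Fin n) (Fin n) (MvPolynomial (Fin n) K) :=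
  ![Matrix.of fun j k => ∑ a, MvPolynomial.C (P (a, j, k)) * MvPolynomial.X a,
    Matrix.of fun j k => ∑ b, MvPolynomial.C (P (j, b, k)) * MvPolynomial.X b,
    Matrix.of fun j k => ∑ c, MvPolynomial.C (P (j, k, c)) * MvPolynomial.X c] i

/-- `h_i(P;x) = det (P *_i x)`, a polynomial in the indeterminates `x`. -/
noncomputable def hpoly (i : Fin 3) (P : Tensor n K) : MvPolynomial (Fin n) K :=
  (contrX i P).det

/-- The Hessian matrix of a polynomial in the indeterminates `x`. -/
noncomputable def hess (p : MvPolynomial (Fin n) K) :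
    Matrix (Fin n) (Fin n) (MvPolynomial (Fin n) K) :=
  Matrix.of fun a b => MvPolynomial.pderiv a (MvPolynomial.pderiv b p)

/-- `f_i(P;x) = (-1)^(n-1) det (H_x (h_i(P;x)))`. -/
noncomputable def fpoly (i : Fin 3) (P : Tensor n K) : MvPolynomial (Fin n) K :=
  (-1) ^ (n - 1) * (hess (hpoly i P)).det

/-- Substitution `x ↦ g x` in a polynomial in the indeterminates `x`. -/
noncomputable def substX (g : Matrix (Fin n) (Fin n) K) (p : MvPolynomial (Fin n) K) :
    MvPolynomial (Fin n) K :=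
  MvPolynomial.aeval (fun j => ∑ k, MvPolynomial.C (g j k) * MvPolynomial.X k) p

end CommRing

/-- A complex tensor is real when all of its entries are real. -/
def IsReal (P : Tensor n ℂ) : Prop := ∀ x, (P x).im = 0

/-- The inclusion of real tensors into complex tensors. -/
noncomputable def toC (n : ℕ) : Tensor n ℝ → Tensor n ℂ := fun P x => (P x : ℂ)

/-- The orbit `𝒟(ℝ)` of `D` under `GL(n,ℝ)³`, viewed inside the complex tensors. -/
def orbitDR (n : ℕ) : Set (Tensor n ℂ) := toC n '' orbitD n ℝ

/-- The border rank of `P`: the smallest `r` such that `P` is a limit of tensors of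
rank at most `r`. -/
noncomputable def borderRank (P : Tensor n ℂ) : ℕ :=
  sInf {r | P ∈ closure {Q : Tensor n ℂ | Q.HasRankLE r}}

/-- The first nonzero entry of every row of `g` equals `1`. -/
def FirstNonzeroOne (g : Matrix (Fin n) (Fin n) ℂ) : Prop :=
  ∀ r c : Fin n, g r c ≠ 0 → (∀ c' : Fin n, c' < c → g r c' = 0) → g r c = 1

/-- The first `2k` rows of `g` are non-real and not purely imaginary, and occur in complex
conjugate pairs (row `2j+1` conjugate to row `2j`); the remaining rows are real. -/
def ConjPairStructure (k : ℕ) (g : Matrix (Fin n) (Fin n) ℂ) : Prop :=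
  (∀ m m' : Fin n, (m : ℕ) < 2 * k → Even (m : ℕ) → (m' : ℕ) = (m : ℕ) + 1 →
      ∀ c, g m' c = (starRingEnd ℂ) (g m c)) ∧
  (∀ m : Fin n, (m : ℕ) < 2 * k → (∃ c, (g m c).im ≠ 0) ∧ (∃ c, (g m c).re ≠ 0)) ∧
  (∀ m : Fin n, 2 * k ≤ (m : ℕ) → ∀ c, (g m c).im = 0)

/-- A normalized decomposition `P = D(g₁,g₂,g₃)` exhibiting signature `(n-2k, k)`:
the first nonzero entry of every row of `g₁,g₂` is `1`, and each `gᵢ` has its first `2k`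
rows non-real occurring in conjugate pairs, with the remaining rows real. -/
def SigDecomp (P : Tensor n ℂ) (k : ℕ) (g₁ g₂ g₃ : Matrix (Fin n) (Fin n) ℂ) : Prop :=
  2 * k ≤ n ∧ IsUnit g₁.det ∧ IsUnit g₂.det ∧ IsUnit g₃.det ∧
  P = (DT n ℂ).act g₁ g₂ g₃ ∧
  FirstNonzeroOne g₁ ∧ FirstNonzeroOne g₂ ∧
  ConjPairStructure k g₁ ∧ ConjPairStructure k g₂ ∧ ConjPairStructure k g₃

/-- `P` has signature `(n-2k, k)`: its unique rank-`n` decomposition has exactly `2k`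
non-real rank-one summands, occurring in conjugate pairs. -/
def HasSignature (P : Tensor n ℂ) (k : ℕ) : Prop :=
  ∃ g₁ g₂ g₃ : Matrix (Fin n) (Fin n) ℂ, SigDecomp P k g₁ g₂ g₃

/-- Cayley's hyperdeterminant of a `2×2×2` tensor. -/
noncomputable def Delta (P : Tensor 2 ℂ) : ℂ :=
  (P (0,0,0) ^ 2 * P (1,1,1) ^ 2 + P (0,0,1) ^ 2 * P (1,1,0) ^ 2
    + P (0,1,0) ^ 2 * P (1,0,1) ^ 2 + P (0,1,1) ^ 2 * P (1,0,0) ^ 2)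
  - 2 * (P (0,0,0) * P (0,0,1) * P (1,1,0) * P (1,1,1)
    + P (0,0,0) * P (0,1,0) * P (1,0,1) * P (1,1,1)
    + P (0,0,0) * P (0,1,1) * P (1,0,0) * P (1,1,1)
    + P (0,0,1) * P (0,1,0) * P (1,0,1) * P (1,1,0)
    + P (0,0,1) * P (0,1,1) * P (1,1,0) * P (1,0,0)
    + P (0,1,0) * P (0,1,1) * P (1,0,1) * P (1,0,0))
  + 4 * (P (0,0,0) * P (0,1,1) * P (1,0,1) * P (1,1,0)
    + P (0,0,1) * P (0,1,0) * P (1,0,0) * P (1,1,1))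

/-- The Levi-Civita symbol on three indices, `ε₁₂₃ = 1`. -/
noncomputable def eps (i j k : Fin 3) : ℂ :=
  if (i, j, k) = ((0 : Fin 3), (1 : Fin 3), (2 : Fin 3)) ∨ (i, j, k) = (1, 2, 0)
      ∨ (i, j, k) = (2, 0, 1) then 1
  else if (i, j, k) = ((2 : Fin 3), (1 : Fin 3), (0 : Fin 3)) ∨ (i, j, k) = (1, 0, 2)
      ∨ (i, j, k) = (0, 2, 1) then -1
  else 0

/-- The degree-6 invariant `τ₃` of `3×3×3` tensors, given by a six-fold Levi-Civita
contraction. -/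
noncomputable def tau3 (P : Tensor 3 ℂ) : ℂ :=
  ∑ i : Fin 3 × Fin 3 × Fin 3, ∑ j : Fin 3 × Fin 3 × Fin 3, ∑ k : Fin 3 × Fin 3 × Fin 3,
    ∑ l : Fin 3 × Fin 3 × Fin 3, ∑ m : Fin 3 × Fin 3 × Fin 3, ∑ o : Fin 3 × Fin 3 × Fin 3,
      P i * P j * P k * P l * P m * P o *
        eps i.1 j.1 k.1 * eps j.2.1 k.2.1 l.2.1 * eps k.2.2 l.2.2 m.2.2 *
        eps l.1 m.1 o.1 * eps m.2.1 o.2.1 i.2.1 * eps o.2.2 i.2.2 j.2.2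

end Tensor


section Aux

open MvPolynomial

variable {n : ℕ} {K : Type*} [CommRing K]

private lemma sum_comm4 {M : Type*} [AddCommMonoid M] (f : Fin n → Fin n → Fin n → Fin n → M) :
    ∑ a, ∑ b, ∑ c, ∑ d, f a b c d = ∑ d, ∑ c, ∑ b, ∑ a, f a b c d := by
  rw [show (∑ a, ∑ b, ∑ c, ∑ d, f a b c d) = ∑ b, ∑ a, ∑ c, ∑ d, f a b c d from
    Finset.sum_comm]
  rw [show (∑ b, ∑ a, ∑ c, ∑ d, f a b c d) = ∑ b, ∑ c, ∑ a, ∑ d, f a b c d from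
    Finset.sum_congr rfl fun _ _ => Finset.sum_comm]
  rw [show (∑ b, ∑ c, ∑ a, ∑ d, f a b c d) = ∑ b, ∑ c, ∑ d, ∑ a, f a b c d from
    Finset.sum_congr rfl fun _ _ => Finset.sum_congr rfl fun _ _ => Finset.sum_comm]
  rw [show (∑ b, ∑ c, ∑ d, ∑ a, f a b c d) = ∑ c, ∑ b, ∑ d, ∑ a, f a b c d from
    Finset.sum_comm]
  rw [show (∑ c, ∑ b, ∑ d, ∑ a, f a b c d) = ∑ c, ∑ d, ∑ b, ∑ a, f a b c d from
    Finset.sum_congr rfl fun _ _ => Finset.sum_comm]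
  exact Finset.sum_comm

private lemma pderiv_substX (g : Matrix (Fin n) (Fin n) K) (a : Fin n)
    (p : MvPolynomial (Fin n) K) :
    pderiv a (Tensor.substX g p) = ∑ j, C (g j a) * Tensor.substX g (pderiv j p) := by
  induction p using MvPolynomial.induction_on with
  | C c => simp [Tensor.substX]
  | add p q hp hq =>
      simp only [Tensor.substX] at hp hq ⊢
      simp only [map_add, mul_add, hp, hq, Finset.sum_add_distrib]
  | mul_X p j hp =>
      simp only [Tensor.substX] at hp ⊢
      have hfd : ∀ m : Fin n,
          pderiv a (∑ k, (C (g m k) : MvPolynomial (Fin n) K) * X k) = C (g m a) := by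
        intro m
        rw [map_sum]
        simp [pderiv_C_mul, pderiv_X, Pi.single_apply, mul_ite, mul_one, mul_zero,
          Finset.sum_ite_eq]
      have hstep : ∀ i : Fin n,
          (C (g i a) : MvPolynomial (Fin n) K)
              * (aeval fun j => ∑ k, (C (g j k) : MvPolynomial (Fin n) K) * X k)
                  (pderiv i (p * X j))
            = C (g i a) * ((aeval fun j => ∑ k, (C (g j k) : MvPolynomial (Fin n) K) * X k)
                  (pderiv i p) * (∑ k, (C (g j k) : MvPolynomial (Fin n) K) * X k))
              + (if i = j then
                  C (g i a) * (aeval fun j => ∑ k,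
                    (C (g j k) : MvPolynomial (Fin n) K) * X k) p else 0) := by
        intro i
        rw [pderiv_mul, pderiv_X, map_add, _root_.map_mul, _root_.map_mul, aeval_X]
        rcases eq_or_ne i j with h | h
        · subst h; simp [Pi.single_apply, mul_add]
        · simp [Pi.single_apply, h, Ne.symm h, mul_add]
      rw [_root_.map_mul, aeval_X, pderiv_mul, hp, hfd]
      rw [Finset.sum_congr rfl fun i _ => hstep i, Finset.sum_add_distrib]
      simp only [Finset.sum_ite_eq', Finset.mem_univ, if_true]
      rw [Finset.sum_mul]
      congr 1
      · exact Finset.sum_congr rfl fun i _ => mul_assoc _ _ _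
      · exact mul_comm _ _

private lemma hess_substX (g : Matrix (Fin n) (Fin n) K) (p : MvPolynomial (Fin n) K) :
    Tensor.hess (Tensor.substX g p)
      = gᵀ.map C * (Tensor.hess p).map (Tensor.substX g) * g.map C := by
  rw [← Matrix.ext_iff]
  intro a b
  simp only [Tensor.hess, Matrix.mul_apply, Matrix.map_apply, Matrix.transpose_apply,
    Matrix.of_apply]
  rw [pderiv_substX, map_sum]
  simp only [pderiv_C_mul, pderiv_substX]
  refine Finset.sum_congr rfl fun j _ => ?_
  rw [Finset.mul_sum, Finset.sum_mul]
  refine Finset.sum_congr rfl fun i _ => ?_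
  ring

private lemma det_map_substX (g : Matrix (Fin n) (Fin n) K)
    (M : Matrix (Fin n) (Fin n) (MvPolynomial (Fin n) K)) :
    (M.map (Tensor.substX g)).det = Tensor.substX g M.det :=
  ((MvPolynomial.aeval fun j => ∑ k, (C (g j k) : MvPolynomial (Fin n) K) * X k).map_det
    M).symm

private lemma det_map_C (g : Matrix (Fin n) (Fin n) K) :
    (g.map (C : K → MvPolynomial (Fin n) K)).det = C g.det :=
  ((C : K →+* MvPolynomial (Fin n) K).map_det g).symm

private lemma det_transpose_map_C (g : Matrix (Fin n) (Fin n) K) :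
    (gᵀ.map (C : K → MvPolynomial (Fin n) K)).det = C g.det := by
  have h : (gᵀ.map (C : K → MvPolynomial (Fin n) K)).det = C gᵀ.det :=
    ((C : K →+* MvPolynomial (Fin n) K).map_det gᵀ).symm
  rw [h, Matrix.det_transpose]

private lemma substX_mul (g : Matrix (Fin n) (Fin n) K) (p q : MvPolynomial (Fin n) K) :
    Tensor.substX g (p * q) = Tensor.substX g p * Tensor.substX g q := by
  simp only [Tensor.substX, _root_.map_mul]

private lemma det_hess_substX (g : Matrix (Fin n) (Fin n) K) (p : MvPolynomial (Fin n) K) :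
    (Tensor.hess (Tensor.substX g p)).det
      = C g.det * Tensor.substX g (Tensor.hess p).det * C g.det := by
  rw [hess_substX, Matrix.det_mul, Matrix.det_mul, det_map_substX, det_transpose_map_C,
    det_map_C]

private lemma hess_C_mul (c : K) (p : MvPolynomial (Fin n) K) :
    Tensor.hess (C c * p) = (C c : MvPolynomial (Fin n) K) • Tensor.hess p := by
  ext a b
  simp [Tensor.hess, pderiv_C_mul, smul_eq_mul]

private lemma fpoly_step (g : Matrix (Fin n) (Fin n) K) (c : K)
    (p q : MvPolynomial (Fin n) K) (h : q = C c * Tensor.substX g p) :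
    (-1 : MvPolynomial (Fin n) K) ^ (n - 1) * (Tensor.hess q).det
      = C (c ^ n * g.det ^ 2)
          * Tensor.substX g ((-1) ^ (n - 1) * (Tensor.hess p).det) := by
  subst h
  rw [hess_C_mul, Matrix.det_smul, det_hess_substX]
  have hs : Tensor.substX g ((-1 : MvPolynomial (Fin n) K) ^ (n - 1) * (Tensor.hess p).det)
      = (-1) ^ (n - 1) * Tensor.substX g (Tensor.hess p).det := by
    simp only [Tensor.substX, _root_.map_mul, map_pow, map_neg, _root_.map_one]
  rw [hs]
  simp only [Fintype.card_fin, _root_.map_mul, map_pow]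
  ring

private lemma contrX_act0 (P : Tensor n K) (g₁ g₂ g₃ : Matrix (Fin n) (Fin n) K) :
    Tensor.contrX 0 (P.act g₁ g₂ g₃)
      = g₂ᵀ.map C * (Tensor.contrX 0 P).map (Tensor.substX g₁) * g₃.map C := by
  rw [← Matrix.ext_iff]
  intro j k
  have lhs : Tensor.contrX 0 (P.act g₁ g₂ g₃) j k
      = ∑ a, ∑ a', ∑ b, ∑ c,
          (C (P (a', b, c)) : MvPolynomial (Fin n) K)
            * C (g₁ a' a) * C (g₂ b j) * C (g₃ c k) * X a := by
    show (∑ a, (C ((P.act g₁ g₂ g₃) (a, j, k)) : MvPolynomial (Fin n) K) * X a) = _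
    refine Finset.sum_congr rfl fun a _ => ?_
    show (C (∑ a', ∑ b, ∑ c, P (a', b, c) * g₁ a' a * g₂ b j * g₃ c k)
        : MvPolynomial (Fin n) K) * X a = _
    rw [map_sum, Finset.sum_mul]
    refine Finset.sum_congr rfl fun a' _ => ?_
    rw [map_sum, Finset.sum_mul]
    refine Finset.sum_congr rfl fun b _ => ?_
    rw [map_sum, Finset.sum_mul]
    refine Finset.sum_congr rfl fun c _ => ?_
    rw [_root_.map_mul, _root_.map_mul, _root_.map_mul]
  rw [lhs, sum_comm4]
  simp only [Matrix.mul_apply, Matrix.map_apply, Matrix.transpose_apply]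
  refine Finset.sum_congr rfl fun c _ => ?_
  rw [Finset.sum_mul]
  refine Finset.sum_congr rfl fun b _ => ?_
  show _ = C (g₂ b j) * Tensor.substX g₁ (∑ a', C (P (a', b, c)) * X a') * C (g₃ c k)
  simp only [Tensor.substX, map_sum, _root_.map_mul, aeval_C, aeval_X, algebraMap_eq]
  rw [Finset.mul_sum, Finset.sum_mul]
  refine Finset.sum_congr rfl fun a' _ => ?_
  rw [Finset.mul_sum, Finset.mul_sum, Finset.sum_mul]
  refine Finset.sum_congr rfl fun a _ => ?_
  ring

private lemma contrX_act1 (P : Tensor n K) (g₁ g₂ g₃ : Matrix (Fin n) (Fin n) K) :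
    Tensor.contrX 1 (P.act g₁ g₂ g₃)
      = g₁ᵀ.map C * (Tensor.contrX 1 P).map (Tensor.substX g₂) * g₃.map C := by
  rw [← Matrix.ext_iff]
  intro j k
  have lhs : Tensor.contrX 1 (P.act g₁ g₂ g₃) j k
      = ∑ b, ∑ a, ∑ b', ∑ c,
          (C (P (a, b', c)) : MvPolynomial (Fin n) K)
            * C (g₁ a j) * C (g₂ b' b) * C (g₃ c k) * X b := by
    show (∑ b, (C ((P.act g₁ g₂ g₃) (j, b, k)) : MvPolynomial (Fin n) K) * X b) = _
    refine Finset.sum_congr rfl fun b _ => ?_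
    show (C (∑ a, ∑ b', ∑ c, P (a, b', c) * g₁ a j * g₂ b' b * g₃ c k)
        : MvPolynomial (Fin n) K) * X b = _
    rw [map_sum, Finset.sum_mul]
    refine Finset.sum_congr rfl fun a _ => ?_
    rw [map_sum, Finset.sum_mul]
    refine Finset.sum_congr rfl fun b' _ => ?_
    rw [map_sum, Finset.sum_mul]
    refine Finset.sum_congr rfl fun c _ => ?_
    rw [_root_.map_mul, _root_.map_mul, _root_.map_mul]
  rw [lhs, sum_comm4]
  simp only [Matrix.mul_apply, Matrix.map_apply, Matrix.transpose_apply]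
  refine Finset.sum_congr rfl fun c _ => ?_
  rw [Finset.sum_mul]
  rw [show (∑ b', ∑ a, ∑ b,
        (C (P (a, b', c)) : MvPolynomial (Fin n) K)
          * C (g₁ a j) * C (g₂ b' b) * C (g₃ c k) * X b)
      = ∑ a, ∑ b', ∑ b,
        (C (P (a, b', c)) : MvPolynomial (Fin n) K)
          * C (g₁ a j) * C (g₂ b' b) * C (g₃ c k) * X b from Finset.sum_comm]
  refine Finset.sum_congr rfl fun a _ => ?_
  show _ = C (g₁ a j) * Tensor.substX g₂ (∑ b', C (P (a, b', c)) * X b') * C (g₃ c k)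
  simp only [Tensor.substX, map_sum, _root_.map_mul, aeval_C, aeval_X, algebraMap_eq]
  rw [Finset.mul_sum, Finset.sum_mul]
  refine Finset.sum_congr rfl fun b' _ => ?_
  rw [Finset.mul_sum, Finset.mul_sum, Finset.sum_mul]
  refine Finset.sum_congr rfl fun b _ => ?_
  ring

private lemma contrX_act2 (P : Tensor n K) (g₁ g₂ g₃ : Matrix (Fin n) (Fin n) K) :
    Tensor.contrX 2 (P.act g₁ g₂ g₃)
      = g₁ᵀ.map C * (Tensor.contrX 2 P).map (Tensor.substX g₃) * g₂.map C := by
  rw [← Matrix.ext_iff]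
  intro j k
  have lhs : Tensor.contrX 2 (P.act g₁ g₂ g₃) j k
      = ∑ c, ∑ a, ∑ b, ∑ c',
          (C (P (a, b, c')) : MvPolynomial (Fin n) K)
            * C (g₁ a j) * C (g₂ b k) * C (g₃ c' c) * X c := by
    show (∑ c, (C ((P.act g₁ g₂ g₃) (j, k, c)) : MvPolynomial (Fin n) K) * X c) = _
    refine Finset.sum_congr rfl fun c _ => ?_
    show (C (∑ a, ∑ b, ∑ c', P (a, b, c') * g₁ a j * g₂ b k * g₃ c' c)
        : MvPolynomial (Fin n) K) * X c = _
    rw [map_sum, Finset.sum_mul]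
    refine Finset.sum_congr rfl fun a _ => ?_
    rw [map_sum, Finset.sum_mul]
    refine Finset.sum_congr rfl fun b _ => ?_
    rw [map_sum, Finset.sum_mul]
    refine Finset.sum_congr rfl fun c' _ => ?_
    rw [_root_.map_mul, _root_.map_mul, _root_.map_mul]
  rw [lhs, sum_comm4]
  rw [show (∑ c' : Fin n, ∑ b, ∑ a, ∑ c,
        (C (P (a, b, c')) : MvPolynomial (Fin n) K)
          * C (g₁ a j) * C (g₂ b k) * C (g₃ c' c) * X c)
      = ∑ b, ∑ c', ∑ a, ∑ c,
        (C (P (a, b, c')) : MvPolynomial (Fin n) K)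
          * C (g₁ a j) * C (g₂ b k) * C (g₃ c' c) * X c from Finset.sum_comm]
  rw [show (∑ b : Fin n, ∑ c', ∑ a, ∑ c,
        (C (P (a, b, c')) : MvPolynomial (Fin n) K)
          * C (g₁ a j) * C (g₂ b k) * C (g₃ c' c) * X c)
      = ∑ b, ∑ a, ∑ c', ∑ c,
        (C (P (a, b, c')) : MvPolynomial (Fin n) K)
          * C (g₁ a j) * C (g₂ b k) * C (g₃ c' c) * X c from
    Finset.sum_congr rfl fun _ _ => Finset.sum_comm]
  simp only [Matrix.mul_apply, Matrix.map_apply, Matrix.transpose_apply]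
  refine Finset.sum_congr rfl fun b _ => ?_
  rw [Finset.sum_mul]
  refine Finset.sum_congr rfl fun a _ => ?_
  show _ = C (g₁ a j) * Tensor.substX g₃ (∑ c', C (P (a, b, c')) * X c') * C (g₂ b k)
  simp only [Tensor.substX, map_sum, _root_.map_mul, aeval_C, aeval_X, algebraMap_eq]
  rw [Finset.mul_sum, Finset.sum_mul]
  refine Finset.sum_congr rfl fun c' _ => ?_
  rw [Finset.mul_sum, Finset.mul_sum, Finset.sum_mul]
  refine Finset.sum_congr rfl fun c _ => ?_
  ring

private lemma hpoly_act (P : Tensor n K) (g₁ g₂ g₃ : Matrix (Fin n) (Fin n) K) :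
    Tensor.hpoly 0 (P.act g₁ g₂ g₃)
        = C (g₂.det * g₃.det) * Tensor.substX g₁ (Tensor.hpoly 0 P)
    ∧ Tensor.hpoly 1 (P.act g₁ g₂ g₃)
        = C (g₁.det * g₃.det) * Tensor.substX g₂ (Tensor.hpoly 1 P)
    ∧ Tensor.hpoly 2 (P.act g₁ g₂ g₃)
        = C (g₁.det * g₂.det) * Tensor.substX g₃ (Tensor.hpoly 2 P) := by
  refine ⟨?_, ?_, ?_⟩ <;> unfold Tensor.hpoly
  · rw [contrX_act0, Matrix.det_mul, Matrix.det_mul, det_map_substX, det_transpose_map_C,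
      det_map_C, _root_.map_mul]
    ring
  · rw [contrX_act1, Matrix.det_mul, Matrix.det_mul, det_map_substX, det_transpose_map_C,
      det_map_C, _root_.map_mul]
    ring
  · rw [contrX_act2, Matrix.det_mul, Matrix.det_mul, det_map_substX, det_transpose_map_C,
      det_map_C, _root_.map_mul]
    ring

end Aux

/-- the transformation law
`f_i(P(g₁,g₂,g₃);x) = det(g_j)ⁿ·det(g_k)ⁿ·det(g_i)²·f_i(P;g_i x)`,
for each `i` with `{i,j,k} = {1,2,3}`. -/
theorem statement_6 (n : ℕ) (P : Tensor n ℂ) (g₁ g₂ g₃ : Matrix (Fin n) (Fin n) ℂ)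
    (h₁ : IsUnit g₁.det) (h₂ : IsUnit g₂.det) (h₃ : IsUnit g₃.det) :
    Tensor.fpoly 0 (P.act g₁ g₂ g₃)
        = MvPolynomial.C (g₂.det ^ n * g₃.det ^ n * g₁.det ^ 2)
            * Tensor.substX g₁ (Tensor.fpoly 0 P)
    ∧ Tensor.fpoly 1 (P.act g₁ g₂ g₃)
        = MvPolynomial.C (g₁.det ^ n * g₃.det ^ n * g₂.det ^ 2)
            * Tensor.substX g₂ (Tensor.fpoly 1 P)
    ∧ Tensor.fpoly 2 (P.act g₁ g₂ g₃)
        = MvPolynomial.C (g₁.det ^ n * g₂.det ^ n * g₃.det ^ 2)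
            * Tensor.substX g₃ (Tensor.fpoly 2 P) := by
  obtain ⟨e0, e1, e2⟩ := hpoly_act P g₁ g₂ g₃
  refine ⟨?_, ?_, ?_⟩ <;> unfold Tensor.fpoly
  · rw [fpoly_step g₁ (g₂.det * g₃.det) _ _ e0, mul_pow]
  · rw [fpoly_step g₂ (g₁.det * g₃.det) _ _ e1, mul_pow]
  · rw [fpoly_step g₃ (g₁.det * g₂.det) _ _ e2, mul_pow]
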